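/- For ordinary three-heap Nim, let π(x) denote the number of P-positions {a,b,c} (as unordered multisets) with a, b, c all less than x. Then π(x) = (3x² − 6xy + 4y² + 3x + 2)/6, where y is the greatest power of 2 less than or equal to x (for x ≥ 1). -/

import Mathlib

open Filter

/-- A move in Nim: strictly decrease one heap. -/
def NimMove (a b : Multiset ℕ) : Prop :=
  ∃ x y, x ∈ a ∧ y < x ∧ b = y ::ₘ a.erase x

theorem NimMove.sum_lt {a b : Multiset ℕ} (h : NimMove a b) : b.sum < a.sum := by
  obtain ⟨x, y, hx, hyx, rfl⟩ := h
  have hc : x ::ₘ a.erase x = a := Multiset.cons_erase hx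
  have h1 : (y ::ₘ a.erase x).sum = y + (a.erase x).sum := Multiset.sum_cons y _
  have h2 : a.sum = x + (a.erase x).sum := by
    conv_lhs => rw [← hc]
    exact Multiset.sum_cons x _
  omega

/-- P-positions of Nim minus a forbidden finite set `F`, by the standard recursion:
a position is P iff every child not in `F` is an N-position. -/
def NimP (F : Finset (Multiset ℕ)) (a : Multiset ℕ) : Prop :=
  ∀ b, NimMove a b → b ∉ F → ¬ NimP F b
termination_by a.sum
decreasing_by exact NimMove.sum_lt (by assumption)

/-- A P-position of Nim−F : a valid position (not forbidden) which is P. -/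
def PPos (F : Finset (Multiset ℕ)) (a : Multiset ℕ) : Prop :=
  a ∉ F ∧ NimP F a

/-- Largest heap size appearing in any forbidden position. -/
def Fmax (F : Finset (Multiset ℕ)) : ℕ := F.sup Multiset.sup

/-- The set S of pairs (x,y) such that there is z with z < y < x and {x,y,z} a P-position. -/
def Sset (F : Finset (Multiset ℕ)) : Set (ℕ × ℕ) :=
  {p | ∃ z, z < p.2 ∧ p.2 < p.1 ∧ PPos F {p.1, p.2, z}}

/-- r(x,y): number of elements of S of the form (x',y) with x' ≥ x. -/
noncomputable def rdef (F : Finset (Multiset ℕ)) (x y : ℕ) : ℕ :=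
  {x' | x ≤ x' ∧ (x', y) ∈ Sset F}.ncard

/-- b(x,y): number of elements of S of the form (x,y') with y' ≤ y. -/
noncomputable def bdef (F : Finset (Multiset ℕ)) (x y : ℕ) : ℕ :=
  {y' | y' ≤ y ∧ (x, y') ∈ Sset F}.ncard

/-- U_{x,y} = A ∪ B ∪ C ∪ D. -/
def Uset (F : Finset (Multiset ℕ)) (x y : ℕ) : Set (ℕ × ℕ) :=
  {p | (p.2 < p.1 ∧ p.1 ≤ x ∧ bdef F p.1 p.1 ≥ p.1 - p.2) ∨
       (p.1 = x ∧ p.2 < y ∧ bdef F x (y - 1) ≥ y - p.2) ∨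
       (y ≤ p.2 ∧ p.2 < x ∧ x ≤ p.1 ∧ rdef F x p.2 > p.1 - x) ∨
       (p.2 < y ∧ y ≤ x ∧ x < p.1 ∧ rdef F (x + 1) p.2 > p.1 - (x + 1))}

/-- Ū_{x,y}: agrees with U_{x,y} for second coordinate < x, and for y' ≥ x contains
(x',y') iff y' < x' ≤ 2y' and (y', ⌊x'/2⌋) ∉ Ū_{x,y}. -/
def Ubar (F : Finset (Multiset ℕ)) (x y : ℕ) (p : ℕ × ℕ) : Prop :=
  if p.2 < x then p ∈ Uset F x y
  else if h : p.2 < p.1 then p.1 ≤ 2 * p.2 ∧ ¬ Ubar F x y (p.2, p.1 / 2)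
  else False
termination_by p.1
decreasing_by exact h

/-- S_n = Ū_{n,0}. -/
def Sn (F : Finset (Multiset ℕ)) (n : ℕ) : Set (ℕ × ℕ) := {p | Ubar F n 0 p}

/-- R_n = {(x,y) : y < n ≤ x ≤ 2y}. -/
def Rn (n : ℕ) : Set (ℕ × ℕ) := {p | p.2 < n ∧ n ≤ p.1 ∧ p.1 ≤ 2 * p.2}

/-- h(m,n) = |R_n ∩ S_m|. -/
noncomputable def hdef (F : Finset (Multiset ℕ)) (m n : ℕ) : ℕ := (Rn n ∩ Sn F m).ncard

/-- π(n): number of P-positions (unordered multisets) with all entries < n. -/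
noncomputable def piNim (F : Finset (Multiset ℕ)) (n : ℕ) : ℕ :=
  {s : Multiset ℕ | s.card = 3 ∧ (∀ a ∈ s, a < n) ∧ PPos F s}.ncard


section NimAux

lemma perm3_swap12 (a b c : ℕ) : ({a, b, c} : Multiset ℕ) = {b, a, c} := Multiset.cons_swap a b {c}
lemma perm3_swap23 (a b c : ℕ) : ({a, b, c} : Multiset ℕ) = {a, c, b} := by
  show a ::ₘ b ::ₘ c ::ₘ 0 = a ::ₘ c ::ₘ b ::ₘ 0
  rw [Multiset.cons_swap b c]
lemma perm3_rot (a b c : ℕ) : ({a, b, c} : Multiset ℕ) = {b, c, a} := by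
  rw [perm3_swap12, perm3_swap23]

lemma erase3_head (a b c : ℕ) : ({a, b, c} : Multiset ℕ).erase a = {b, c} := by
  rw [Multiset.insert_eq_cons, Multiset.erase_cons_head]

lemma perm3_rot2 (a b c : ℕ) : ({a, b, c} : Multiset ℕ) = {c, a, b} := by
  rw [perm3_rot, perm3_rot]

lemma move_triple {a y : ℕ} (b c : ℕ) (h : y < a) :
    NimMove {a, b, c} {y, b, c} :=
  ⟨a, y, by simp, h, by rw [erase3_head]; rfl⟩

lemma bouton : ∀ n a b c : ℕ, a + b + c = n → (NimP ∅ {a, b, c} ↔ a ^^^ b ^^^ c = 0) := by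
  intro n
  induction n using Nat.strong_induction_on with
  | _ n ih =>
    intro a b c hn
    constructor
    · intro hP
      by_contra hx
      rw [NimP] at hP
      rcases Nat.xor_trichotomy hx with h | h | h
      · exact hP {b ^^^ c, b, c} (move_triple b c h) (by simp)
          ((ih _ (by omega) _ _ _ rfl).2 (by
            simp [Nat.xor_comm, Nat.xor_assoc]))
      · have h' : c ^^^ a < b := h
        refine hP {c ^^^ a, a, c} ?_ (by simp)
          ((ih ((c^^^a)+a+c) (by omega) _ _ _ rfl).2 ?_)
        · rw [perm3_swap12]; exact move_triple a c h'
        · simp [Nat.xor_comm, Nat.xor_assoc]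
      · refine hP {a ^^^ b, a, b} ?_ (by simp)
          ((ih ((a^^^b)+a+b) (by omega) _ _ _ rfl).2 ?_)
        · rw [perm3_rot2]; exact move_triple a b h
        · simp [Nat.xor_comm, Nat.xor_assoc]
    · intro hx
      rw [NimP]
      rintro b' ⟨u, v, hu, hvu, rfl⟩ -
      have hmem : u = a ∨ u = b ∨ u = c := by simpa using hu
      rcases hmem with rfl | rfl | rfl
      · rw [erase3_head]
        intro hP'
        have h0 : v ^^^ b ^^^ c = 0 := (ih (v + b + c) (by omega) v b c rfl).1 hP'
        have h1 : v ^^^ b = c := by simpa using h0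
        have h2 : u ^^^ b = c := by simpa using hx
        have : v = u := by
          have : (v ^^^ b) ^^^ b = (u ^^^ b) ^^^ b := by rw [h1, h2]
          simpa [Nat.xor_xor_cancel_right] using this
        omega
      · rw [perm3_swap12, erase3_head]
        intro hP'
        have h0 : v ^^^ a ^^^ c = 0 := (ih (v + a + c) (by omega) v a c rfl).1 hP'
        have h1 : v ^^^ a = c := by simpa using h0
        have h2 : u ^^^ a = c := by
          have h3 : a ^^^ u = c := by simpa using hx
          rw [Nat.xor_comm]; exact h3
        have : v = u := by
          have : (v ^^^ a) ^^^ a = (u ^^^ a) ^^^ a := by rw [h1, h2]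
          simpa [Nat.xor_xor_cancel_right] using this
        omega
      · rw [perm3_rot2, erase3_head]
        intro hP'
        have h0 : v ^^^ a ^^^ b = 0 := (ih (v + a + b) (by omega) v a b rfl).1 hP'
        have h1 : v ^^^ a = b := by simpa using h0
        have h2 : a ^^^ b = u := Nat.xor_eq_zero_iff.1 hx
        have : v = u := by
          have hv : v = b ^^^ a := by
            have : (v ^^^ a) ^^^ a = b ^^^ a := by rw [h1]
            simpa [Nat.xor_xor_cancel_right] using this
          rw [hv, Nat.xor_comm, h2]
        omega


lemma two_pow_xor_eq_add {k c : ℕ} (hc : c < 2^k) : 2^k ^^^ c = 2^k + c := by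
  apply Nat.eq_of_testBit_eq
  intro j
  rcases lt_trichotomy j k with hj | rfl | hj
  · rw [Nat.testBit_xor, Nat.testBit_two_pow_of_ne (by omega),
      Nat.testBit_two_pow_add_gt hj]
    simp
  · rw [Nat.testBit_xor, Nat.testBit_two_pow_self, Nat.testBit_two_pow_add_eq,
      (by exact Nat.testBit_lt_two_pow hc : Nat.testBit c j = false)]
    rfl
  · have h4 : (2:ℕ)^k < 2^j := Nat.pow_lt_pow_right (by norm_num) hj
    have h3 : 2 ^ (k+1) ≤ 2 ^ j := Nat.pow_le_pow_right (by norm_num) (by omega)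
    have h5 : (2:ℕ)^(k+1) = 2 * 2^k := by ring
    rw [Nat.testBit_xor, Nat.testBit_two_pow_of_ne (by omega),
      Nat.testBit_lt_two_pow (by omega), Nat.testBit_lt_two_pow (by omega)]
    rfl

-- mixed quadrant for a in high part, b in low part
lemma xor_high_low {k a b : ℕ} (ha : 2^k ≤ a) (ha2 : a < 2^(k+1)) (hb : b < 2^k) :
    a ^^^ b = 2^k + ((a - 2^k) ^^^ b) := by
  have h1 : a - 2^k < 2^k := by
    have : (2:ℕ)^(k+1) = 2*2^k := by ring
    omega
  have hx : (a - 2^k) ^^^ b < 2^k := Nat.xor_lt_two_pow h1 hb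
  have ha' : a = 2^k ^^^ (a - 2^k) := by rw [two_pow_xor_eq_add h1]; omega
  calc a ^^^ b = (2^k ^^^ (a - 2^k)) ^^^ b := by rw [← ha']
    _ = 2^k ^^^ ((a - 2^k) ^^^ b) := Nat.xor_assoc _ _ _
    _ = 2^k + ((a - 2^k) ^^^ b) := two_pow_xor_eq_add hx

lemma cardA (k x : ℕ) (hx : 1 ≤ x) (h1 : 2^k ≤ x) (h2 : x < 2^(k+1)) :
    ((Finset.range x ×ˢ Finset.range x).filter (fun p => p.1 ^^^ p.2 < x)).card
      = 2^k * 2^k + 3 * ((x - 2^k) * (x - 2^k)) := by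
  set y := 2^k with hy
  set r := x - y with hr
  have hrange : Finset.range x = Finset.range y ∪ Finset.Ico y x := by
    rw [Finset.range_eq_Ico, Finset.range_eq_Ico]
    exact (Finset.Ico_union_Ico_eq_Ico (Nat.zero_le y) h1).symm
  have h2y : x < 2*y := by have : (2:ℕ)^(k+1) = 2*y := by rw [hy]; ring
                           omega
  have hdisj : Disjoint (Finset.range y) (Finset.Ico y x) := by
    rw [Finset.range_eq_Ico]
    exact Finset.Ico_disjoint_Ico_consecutive 0 y x
  have hry : r ≤ y := by omega
  have hxyr : x = y + r := by omega
  have key_hl : ∀ a b : ℕ, a < y → y ≤ b → b < x → (a ^^^ b < x ↔ a ^^^ (b - y) < r) := by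
    intro a b hay hyb hbx
    rw [Nat.xor_comm a b, xor_high_low hyb (by omega) hay, Nat.xor_comm (b - y) a]
    omega
  have hsplit : (Finset.range x ×ˢ Finset.range x) =
      ((Finset.range y ×ˢ Finset.range y) ∪ (Finset.range y ×ˢ Finset.Ico y x))
      ∪ ((Finset.Ico y x ×ˢ Finset.range y) ∪ (Finset.Ico y x ×ˢ Finset.Ico y x)) := by
    rw [hrange, Finset.union_product, Finset.product_union, Finset.product_union]
  set P : ℕ × ℕ → Prop := fun p => p.1 ^^^ p.2 < x with hP
  have hd1 : ∀ t u : Finset ℕ, Disjoint ((Finset.range y ×ˢ t).filter P) ((Finset.Ico y x ×ˢ u).filter P) := by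
    intro t u
    rw [Finset.disjoint_left]
    intro p hp hq
    simp only [Finset.mem_filter, Finset.mem_product, Finset.mem_range, Finset.mem_Ico] at hp hq
    omega
  have hd2 : Disjoint ((Finset.range y ×ˢ Finset.range y).filter P)
      ((Finset.range y ×ˢ Finset.Ico y x).filter P) := by
    rw [Finset.disjoint_left]
    intro p hp hq
    simp only [Finset.mem_filter, Finset.mem_product, Finset.mem_range, Finset.mem_Ico] at hp hq
    omega
  have hd3 : Disjoint ((Finset.Ico y x ×ˢ Finset.range y).filter P)
      ((Finset.Ico y x ×ˢ Finset.Ico y x).filter P) := by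
    rw [Finset.disjoint_left]
    intro p hp hq
    simp only [Finset.mem_filter, Finset.mem_product, Finset.mem_range, Finset.mem_Ico] at hp hq
    omega
  have hd4 : Disjoint (((Finset.range y ×ˢ Finset.range y).filter P) ∪ ((Finset.range y ×ˢ Finset.Ico y x).filter P))
      (((Finset.Ico y x ×ˢ Finset.range y).filter P) ∪ ((Finset.Ico y x ×ˢ Finset.Ico y x).filter P)) := by
    simp only [Finset.disjoint_union_left, Finset.disjoint_union_right]
    exact ⟨⟨hd1 _ _, hd1 _ _⟩, ⟨hd1 _ _, hd1 _ _⟩⟩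
  have hcard11 : ((Finset.range y ×ˢ Finset.range y).filter P).card = y * y := by
    rw [Finset.filter_true_of_mem, Finset.card_product, Finset.card_range]
    intro p hp
    simp only [Finset.mem_product, Finset.mem_range] at hp
    have := Nat.xor_lt_two_pow (n := k) (by omega : p.1 < 2^k) (by omega : p.2 < 2^k)
    show p.1 ^^^ p.2 < x
    omega
  have hcard22 : ((Finset.Ico y x ×ˢ Finset.Ico y x).filter P).card = r * r := by
    rw [Finset.filter_true_of_mem, Finset.card_product, Nat.card_Ico]
    intro p hp
    simp only [Finset.mem_product, Finset.mem_Ico] at hp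
    show p.1 ^^^ p.2 < x
    have e1 : p.1 = 2^k ^^^ (p.1 - y) := by
      rw [two_pow_xor_eq_add (by omega)]; omega
    have e2 : p.2 = 2^k ^^^ (p.2 - y) := by
      rw [two_pow_xor_eq_add (by omega)]; omega
    have e3 : p.1 ^^^ p.2 = (p.1 - y) ^^^ (p.2 - y) := by
      conv_lhs => rw [e1, e2]
      rw [Nat.xor_assoc, ← Nat.xor_assoc (p.1 - y), Nat.xor_comm (p.1 - y) (2^k),
        Nat.xor_assoc, ← Nat.xor_assoc]
      simp
    rw [e3]
    have := Nat.xor_lt_two_pow (n := k) (by omega : p.1 - y < 2^k) (by omega : p.2 - y < 2^k)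
    omega
  have hcard12 : ((Finset.range y ×ˢ Finset.Ico y x).filter P).card = r * r := by
    rw [show r * r = (Finset.range r ×ˢ Finset.range r).card by
      rw [Finset.card_product, Finset.card_range]]
    apply Finset.card_nbij' (i := fun p => (p.1 ^^^ (p.2 - y), p.2 - y))
      (j := fun q => (q.1 ^^^ q.2, q.2 + y))
    · intro p hp
      simp only [Finset.mem_coe, Finset.mem_filter, Finset.mem_product, Finset.mem_range, Finset.mem_Ico, hP] at hp ⊢
      have := (key_hl p.1 p.2 hp.1.1 hp.1.2.1 hp.1.2.2).1 hp.2
      omega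
    · intro q hq
      simp only [Finset.mem_coe, Finset.mem_filter, Finset.mem_product, Finset.mem_range, Finset.mem_Ico, hP] at hq ⊢
      have hq1 : q.1 < y := by omega
      have hq2 : q.2 < y := by omega
      have hxor : q.1 ^^^ q.2 < y := Nat.xor_lt_two_pow (by omega) (by omega)
      refine ⟨⟨by omega, by omega, by omega⟩, ?_⟩
      rw [key_hl _ _ hxor (by omega) (by omega)]
      simp only [Nat.add_sub_cancel]
      rw [Nat.xor_assoc]
      simpa using hq.1
    · intro p hp
      simp only [Finset.mem_coe, Finset.mem_filter, Finset.mem_product, Finset.mem_range, Finset.mem_Ico, hP] at hp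
      ext
      · show p.1 ^^^ (p.2 - y) ^^^ (p.2 - y) = p.1
        rw [Nat.xor_assoc]; simp
      · show p.2 - y + y = p.2
        omega
    · intro q hq
      simp only [Finset.mem_coe, Finset.mem_filter, Finset.mem_product, Finset.mem_range, hP] at hq
      have h5 : q.2 + y - y = q.2 := by omega
      ext
      · show q.1 ^^^ q.2 ^^^ (q.2 + y - y) = q.1
        rw [h5, Nat.xor_assoc]; simp
      · show q.2 + y - y = q.2
        exact h5
  have hcard21 : ((Finset.Ico y x ×ˢ Finset.range y).filter P).card = r * r := by
    rw [show r * r = (Finset.range r ×ˢ Finset.range r).card by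
      rw [Finset.card_product, Finset.card_range]]
    apply Finset.card_nbij' (i := fun p => (p.1 - y, p.2 ^^^ (p.1 - y)))
      (j := fun q => (q.1 + y, q.2 ^^^ q.1))
    · intro p hp
      simp only [Finset.mem_coe, Finset.mem_filter, Finset.mem_product, Finset.mem_range, Finset.mem_Ico, hP] at hp ⊢
      have hcond : p.2 ^^^ p.1 < x := by rw [Nat.xor_comm]; exact hp.2
      have := (key_hl p.2 p.1 hp.1.2 hp.1.1.1 hp.1.1.2).1 hcond
      omega
    · intro q hq
      simp only [Finset.mem_coe, Finset.mem_filter, Finset.mem_product, Finset.mem_range, Finset.mem_Ico, hP] at hq ⊢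
      have hxor : q.2 ^^^ q.1 < y := Nat.xor_lt_two_pow (by omega) (by omega)
      refine ⟨⟨⟨by omega, by omega⟩, by omega⟩, ?_⟩
      rw [Nat.xor_comm, key_hl _ _ hxor (by omega) (by omega)]
      simp only [Nat.add_sub_cancel]
      rw [Nat.xor_assoc]
      simpa using hq.2
    · intro p hp
      simp only [Finset.mem_coe, Finset.mem_filter, Finset.mem_product, Finset.mem_range, Finset.mem_Ico, hP] at hp
      ext
      · show p.1 - y + y = p.1
        omega
      · show p.2 ^^^ (p.1 - y) ^^^ (p.1 - y) = p.2
        rw [Nat.xor_assoc]; simp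
    · intro q hq
      simp only [Finset.mem_coe, Finset.mem_filter, Finset.mem_product, Finset.mem_range, hP] at hq
      have h5 : q.1 + y - y = q.1 := by omega
      ext
      · show q.1 + y - y = q.1
        exact h5
      · show q.2 ^^^ q.1 ^^^ (q.1 + y - y) = q.2
        rw [h5, Nat.xor_assoc]; simp
  rw [hsplit, Finset.filter_union, Finset.filter_union, Finset.filter_union,
    Finset.card_union_of_disjoint hd4, Finset.card_union_of_disjoint hd2,
    Finset.card_union_of_disjoint hd3, hcard11, hcard12, hcard21, hcard22]
  ring

lemma pair_eq_pair' {a b c d : ℕ} (h : ({a, b} : Multiset ℕ) = {c, d}) :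
    (a = c ∧ b = d) ∨ (a = d ∧ b = c) := by
  have ha : a ∈ ({c, d} : Multiset ℕ) := h ▸ (by simp)
  simp only [Multiset.insert_eq_cons, Multiset.mem_cons, Multiset.mem_singleton] at ha
  rcases ha with rfl | rfl
  · left
    exact ⟨rfl, by simpa using (Multiset.cons_inj_right a).1 h⟩
  · right
    refine ⟨rfl, ?_⟩
    rw [show ({c, a} : Multiset ℕ) = {a, c} from Multiset.cons_swap c a _] at h
    simpa using (Multiset.cons_inj_right a).1 h

/-- triple equality cases -/
lemma triple_mem_cases {p u v w : ℕ} (h : p ∈ ({u, v, w} : Multiset ℕ)) :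
    p = u ∨ p = v ∨ p = w := by simpa using h

def Phi (p : ℕ × ℕ) : Multiset ℕ := {p.1, p.2, p.1 ^^^ p.2}

def Aset (x : ℕ) : Finset (ℕ × ℕ) :=
  (Finset.range x ×ˢ Finset.range x).filter (fun p => p.1 ^^^ p.2 < x)

def A1set (x : ℕ) : Finset (ℕ × ℕ) :=
  (Aset x).filter (fun p => ¬(p.1 = p.2 ∨ p.1 = 0 ∨ p.2 = 0))

lemma mem_Aset {x : ℕ} {p : ℕ × ℕ} :
    p ∈ Aset x ↔ p.1 < x ∧ p.2 < x ∧ p.1 ^^^ p.2 < x := by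
  simp [Aset, and_assoc]

lemma mem_A1set {x : ℕ} {p : ℕ × ℕ} :
    p ∈ A1set x ↔ (p.1 < x ∧ p.2 < x ∧ p.1 ^^^ p.2 < x) ∧ p.1 ≠ p.2 ∧ p.1 ≠ 0 ∧ p.2 ≠ 0 := by
  simp [A1set, mem_Aset, and_assoc, not_or]

lemma xor_ne_left {u v : ℕ} (hv : v ≠ 0) : u ^^^ v ≠ u := by
  intro h
  apply hv
  have h2 : u ^^^ (u ^^^ v) = u ^^^ u := congrArg (u ^^^ ·) h
  rwa [Nat.xor_xor_cancel_left, Nat.xor_self] at h2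

lemma xor_cancel_left' (u v : ℕ) : u ^^^ (u ^^^ v) = v := Nat.xor_xor_cancel_left u v
lemma xor_cancel_right' (u v : ℕ) : (u ^^^ v) ^^^ v = u := Nat.xor_xor_cancel_right u v
lemma xor_comm_cancel (u v : ℕ) : v ^^^ (u ^^^ v) = u := by
  rw [Nat.xor_comm u v]; exact Nat.xor_xor_cancel_left v u
lemma xor_left_cancel'' (u v : ℕ) : (u ^^^ v) ^^^ u = v := by
  rw [Nat.xor_comm u v]; exact Nat.xor_xor_cancel_right v u

lemma fiber_eq (x u v : ℕ) (hu : u < x) (hv : v < x) (hw : u ^^^ v < x)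
    (huv : u ≠ v) (hu0 : u ≠ 0) (hv0 : v ≠ 0) :
    (A1set x).filter (fun q => Phi q = Phi (u, v)) =
      {(u,v),(v,u),(u,u^^^v),(u^^^v,u),(v,u^^^v),(u^^^v,v)} := by
  set w := u ^^^ v with hwdef
  have hwu : w ≠ u := xor_ne_left hv0
  have hwv : w ≠ v := by rw [hwdef, Nat.xor_comm]; exact xor_ne_left hu0
  have hw0 : w ≠ 0 := by simpa [hwdef] using huv
  have hPhiuv : Phi (u, v) = ({u, v, w} : Multiset ℕ) := rfl
  have e_uw : u ^^^ w = v := xor_cancel_left' u v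
  have e_wu : w ^^^ u = v := xor_left_cancel'' u v
  have e_vw : v ^^^ w = u := xor_comm_cancel u v
  have e_wv : w ^^^ v = u := xor_cancel_right' u v
  have e_vu : v ^^^ u = w := by rw [hwdef, Nat.xor_comm]
  ext q
  obtain ⟨q1, q2⟩ := q
  simp only [Finset.mem_filter, Finset.mem_insert, Finset.mem_singleton, Prod.mk.injEq]
  constructor
  · rintro ⟨hq, hPhi⟩
    rw [mem_A1set] at hq
    obtain ⟨⟨hq1x, hq2x, hqxx⟩, hq12, hq10, hq20⟩ := hq
    rw [hPhiuv] at hPhi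
    have hq1mem : q1 ∈ ({u, v, w} : Multiset ℕ) := by
      rw [← hPhi]; simp [Phi]
    rcases triple_mem_cases hq1mem with h1 | h1 | h1
    · rw [h1] at hPhi
      have hpair : ({q2, u ^^^ q2} : Multiset ℕ) = {v, w} :=
        (Multiset.cons_inj_right u).1 hPhi
      rcases pair_eq_pair' hpair with ⟨h2, -⟩ | ⟨h2, -⟩
      · tauto
      · tauto
    · rw [h1, show ({u, v, w} : Multiset ℕ) = {v, u, w} from perm3_swap12 u v w] at hPhi
      have hpair : ({q2, v ^^^ q2} : Multiset ℕ) = {u, w} :=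
        (Multiset.cons_inj_right v).1 hPhi
      rcases pair_eq_pair' hpair with ⟨h2, -⟩ | ⟨h2, -⟩
      · tauto
      · tauto
    · rw [h1, show ({u, v, w} : Multiset ℕ) = {w, u, v} from perm3_rot2 u v w] at hPhi
      have hpair : ({q2, w ^^^ q2} : Multiset ℕ) = {u, v} :=
        (Multiset.cons_inj_right w).1 hPhi
      rcases pair_eq_pair' hpair with ⟨h2, -⟩ | ⟨h2, -⟩
      · tauto
      · tauto
  · intro hcases
    rcases hcases with ⟨h1,h2⟩|⟨h1,h2⟩|⟨h1,h2⟩|⟨h1,h2⟩|⟨h1,h2⟩|⟨h1,h2⟩ <;> rw [h1, h2]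
    · exact ⟨mem_A1set.2 ⟨⟨hu, hv, hw⟩, huv, hu0, hv0⟩, rfl⟩
    · refine ⟨mem_A1set.2 ⟨⟨hv, hu, by rwa [e_vu]⟩, Ne.symm huv, hv0, hu0⟩, ?_⟩
      show ({v, u, v ^^^ u} : Multiset ℕ) = _
      rw [e_vu, hPhiuv]; exact (perm3_swap12 u v w).symm
    · refine ⟨mem_A1set.2 ⟨⟨hu, hw, by rwa [e_uw]⟩, Ne.symm hwu, hu0, hw0⟩, ?_⟩
      show ({u, w, u ^^^ w} : Multiset ℕ) = _
      rw [e_uw, hPhiuv]; exact (perm3_swap23 u v w).symm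
    · refine ⟨mem_A1set.2 ⟨⟨hw, hu, by rwa [e_wu]⟩, hwu, hw0, hu0⟩, ?_⟩
      show ({w, u, w ^^^ u} : Multiset ℕ) = _
      rw [e_wu, hPhiuv]; exact (perm3_rot2 u v w).symm
    · refine ⟨mem_A1set.2 ⟨⟨hv, hw, by rwa [e_vw]⟩, hwv.symm, hv0, hw0⟩, ?_⟩
      show ({v, w, v ^^^ w} : Multiset ℕ) = _
      rw [e_vw, hPhiuv]; exact (perm3_rot u v w).symm
    · refine ⟨mem_A1set.2 ⟨⟨hw, hv, by rwa [e_wv]⟩, hwv, hw0, hv0⟩, ?_⟩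
      show ({w, v, w ^^^ v} : Multiset ℕ) = _
      rw [e_wv, hPhiuv]; exact ((perm3_rot2 u v w).trans (perm3_swap23 w u v)).symm

lemma fiber_card (x u v : ℕ) (hu : u < x) (hv : v < x) (hw : u ^^^ v < x)
    (huv : u ≠ v) (hu0 : u ≠ 0) (hv0 : v ≠ 0) :
    ((A1set x).filter (fun q => Phi q = Phi (u, v))).card = 6 := by
  have hwu : u ^^^ v ≠ u := xor_ne_left hv0
  have hwv : u ^^^ v ≠ v := by rw [Nat.xor_comm]; exact xor_ne_left hu0
  have hw0 : u ^^^ v ≠ 0 := by simpa using huv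
  rw [fiber_eq x u v hu hv hw huv hu0 hv0]
  rw [Finset.card_insert_of_notMem (by
      simp only [Finset.mem_insert, Finset.mem_singleton, Prod.mk.injEq]; omega),
    Finset.card_insert_of_notMem (by
      simp only [Finset.mem_insert, Finset.mem_singleton, Prod.mk.injEq]; omega),
    Finset.card_insert_of_notMem (by
      simp only [Finset.mem_insert, Finset.mem_singleton, Prod.mk.injEq]; omega),
    Finset.card_insert_of_notMem (by
      simp only [Finset.mem_insert, Finset.mem_singleton, Prod.mk.injEq]; omega),
    Finset.card_insert_of_notMem (by
      simp only [Finset.mem_singleton, Prod.mk.injEq]; omega),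
    Finset.card_singleton]

lemma A1_card (x : ℕ) : (A1set x).card = 6 * ((A1set x).image Phi).card := by
  rw [Finset.card_eq_sum_card_image Phi]
  rw [Finset.sum_congr rfl (fun s hs => ?_), Finset.sum_const, smul_eq_mul, mul_comm]
  obtain ⟨p, hp, rfl⟩ := Finset.mem_image.1 hs
  obtain ⟨u, v⟩ := p
  rw [mem_A1set] at hp
  obtain ⟨⟨h1, h2, h3⟩, h4, h5, h6⟩ := hp
  exact fiber_card x u v h1 h2 h3 h4 h5 h6

def A0set (x : ℕ) : Finset (ℕ × ℕ) :=
  (Aset x).filter (fun p => p.1 = p.2 ∨ p.1 = 0 ∨ p.2 = 0)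

lemma mem_A0set {x : ℕ} {p : ℕ × ℕ} : p ∈ A0set x ↔
    (p.1 < x ∧ p.2 < x ∧ p.1 ^^^ p.2 < x) ∧ (p.1 = p.2 ∨ p.1 = 0 ∨ p.2 = 0) := by
  simp [A0set, mem_Aset, and_assoc]

lemma A0_eq (x : ℕ) (hx : 1 ≤ x) : A0set x =
    ((Finset.range x).image fun a => (a,a)) ∪ ((Finset.Ico 1 x).image fun b => ((0:ℕ),b))
      ∪ ((Finset.Ico 1 x).image fun a => (a,(0:ℕ))) := by
  ext p
  obtain ⟨p1, p2⟩ := p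
  rw [Finset.mem_union, Finset.mem_union, mem_A0set]
  simp only [Finset.mem_image, Finset.mem_range, Finset.mem_Ico, Prod.mk.injEq]
  constructor
  · rintro ⟨⟨h1, h2, h3⟩, h4 | h4 | h4⟩
    · exact Or.inl (Or.inl ⟨p1, h1, rfl, h4⟩)
    · subst h4
      rcases Nat.eq_zero_or_pos p2 with rfl | hp2
      · exact Or.inl (Or.inl ⟨0, hx, rfl, rfl⟩)
      · exact Or.inl (Or.inr ⟨p2, ⟨hp2, h2⟩, rfl, rfl⟩)
    · subst h4
      rcases Nat.eq_zero_or_pos p1 with rfl | hp1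
      · exact Or.inl (Or.inl ⟨0, hx, rfl, rfl⟩)
      · exact Or.inr ⟨p1, ⟨hp1, h1⟩, rfl, rfl⟩
  · rintro ((⟨a, ha, h5, h6⟩ | ⟨b, hb, h5, h6⟩) | ⟨a, ha, h5, h6⟩) <;> subst h5 <;> subst h6
    · refine ⟨⟨ha, ha, ?_⟩, Or.inl rfl⟩
      rw [Nat.xor_self]; omega
    · refine ⟨⟨by omega, hb.2, ?_⟩, Or.inr (Or.inl rfl)⟩
      rw [Nat.zero_xor]; omega
    · refine ⟨⟨ha.2, by omega, ?_⟩, Or.inr (Or.inr rfl)⟩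
      rw [Nat.xor_zero]; omega

lemma A0_card (x : ℕ) (hx : 1 ≤ x) : (A0set x).card + 2 = 3 * x := by
  have hinj1 : Function.Injective (fun a : ℕ => (a,a)) := by
    intro a b h; simpa [Prod.ext_iff] using h
  have hinj2 : Function.Injective (fun b : ℕ => ((0:ℕ),b)) := by
    intro a b h; simpa [Prod.ext_iff] using h
  have hinj3 : Function.Injective (fun a : ℕ => (a,(0:ℕ))) := by
    intro a b h; simpa [Prod.ext_iff] using h
  have hd1 : Disjoint (((Finset.range x).image fun a => (a,a)) ∪ ((Finset.Ico 1 x).image fun b => ((0:ℕ),b)))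
      ((Finset.Ico 1 x).image fun a => (a,(0:ℕ))) := by
    rw [Finset.disjoint_left]
    intro p hp hq
    obtain ⟨b, hb, hele⟩ := Finset.mem_image.1 hq
    rcases Finset.mem_union.1 hp with hp' | hp' <;>
      obtain ⟨a, ha, hele'⟩ := Finset.mem_image.1 hp' <;>
      rw [← hele'] at hele <;>
      simp only [Prod.mk.injEq] at hele <;>
      simp only [Finset.mem_range, Finset.mem_Ico] at ha hb <;>
      omega
  have hd2 : Disjoint ((Finset.range x).image fun a => (a,a))
      ((Finset.Ico 1 x).image fun b => ((0:ℕ),b)) := by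
    rw [Finset.disjoint_left]
    intro p hp hq
    obtain ⟨a, ha, hele'⟩ := Finset.mem_image.1 hp
    obtain ⟨b, hb, hele⟩ := Finset.mem_image.1 hq
    rw [← hele'] at hele
    simp only [Prod.mk.injEq] at hele
    simp only [Finset.mem_range, Finset.mem_Ico] at ha hb
    omega
  rw [A0_eq x hx, Finset.card_union_of_disjoint hd1, Finset.card_union_of_disjoint hd2,
    Finset.card_image_of_injective _ hinj1, Finset.card_image_of_injective _ hinj2,
    Finset.card_image_of_injective _ hinj3, Finset.card_range, Nat.card_Ico]
  omega

lemma A0_image (x : ℕ) :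
    (A0set x).image Phi = (Finset.range x).image (fun a => ({a, a, 0} : Multiset ℕ)) := by
  ext s
  simp only [Finset.mem_image, Finset.mem_range]
  constructor
  · rintro ⟨p, hp, rfl⟩
    obtain ⟨p1, p2⟩ := p
    rw [mem_A0set] at hp
    dsimp only at hp
    obtain ⟨⟨h1, h2, -⟩, h4 | h4 | h4⟩ := hp
    · subst h4
      refine ⟨p1, h1, ?_⟩
      show ({p1, p1, 0} : Multiset ℕ) = ({p1, p1, p1 ^^^ p1} : Multiset ℕ)
      rw [Nat.xor_self]
    · subst h4
      refine ⟨p2, h2, ?_⟩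
      show ({p2, p2, 0} : Multiset ℕ) = ({0, p2, 0 ^^^ p2} : Multiset ℕ)
      rw [Nat.zero_xor]
      exact (perm3_rot 0 p2 p2).symm
    · subst h4
      refine ⟨p1, h1, ?_⟩
      show ({p1, p1, 0} : Multiset ℕ) = ({p1, 0, p1 ^^^ 0} : Multiset ℕ)
      rw [Nat.xor_zero]
      exact (perm3_swap23 p1 0 p1).symm
  · rintro ⟨a, ha, rfl⟩
    refine ⟨(a, a), mem_A0set.2 ⟨⟨ha, ha, by rw [Nat.xor_self]; omega⟩, Or.inl rfl⟩, ?_⟩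
    show ({a, a, a ^^^ a} : Multiset ℕ) = _
    rw [Nat.xor_self]

lemma dup_image_card (x : ℕ) :
    ((Finset.range x).image (fun a => ({a, a, 0} : Multiset ℕ))).card = x := by
  rw [Finset.card_image_of_injective, Finset.card_range]
  intro a b h
  have hs := congrArg Multiset.sum h
  have hs2 : a + a = b + b := by simpa using hs
  omega

lemma img_disjoint (x : ℕ) :
    Disjoint ((A0set x).image Phi) ((A1set x).image Phi) := by
  rw [A0_image x, Finset.disjoint_left]
  intro s hs hs'
  obtain ⟨a, -, rfl⟩ := Finset.mem_image.1 hs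
  obtain ⟨p, hp, hPhi⟩ := Finset.mem_image.1 hs'
  obtain ⟨p1, p2⟩ := p
  rw [mem_A1set] at hp
  obtain ⟨-, h4, h5, h6⟩ := hp
  have hmem1 : p1 ∈ ({a, a, 0} : Multiset ℕ) := by
    rw [← hPhi]; simp [Phi]
  have hmem2 : p2 ∈ ({a, a, 0} : Multiset ℕ) := by
    rw [← hPhi]; simp [Phi]
  have e1 : p1 = a ∨ p1 = 0 := by simpa using hmem1
  have e2 : p2 = a ∨ p2 = 0 := by simpa using hmem2
  omega

lemma Aset_split (x : ℕ) : A0set x ∪ A1set x = Aset x :=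
  Finset.filter_union_filter_not_eq _ _

lemma M_eq (x : ℕ) (hx : 1 ≤ x) :
    {s : Multiset ℕ | Multiset.card s = 3 ∧ (∀ a ∈ s, a < x) ∧ PPos ∅ s}
      = ↑((Aset x).image Phi) := by
  ext s
  simp only [Set.mem_setOf_eq, Finset.coe_image, Set.mem_image, Finset.mem_coe, PPos]
  constructor
  · rintro ⟨hcard, hlt, -, hP⟩
    obtain ⟨a, b, c, rfl⟩ := Multiset.card_eq_three.1 hcard
    have hxor : a ^^^ b ^^^ c = 0 := (bouton (a+b+c) a b c rfl).1 hP
    have hc : c = a ^^^ b := by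
      have := Nat.xor_eq_zero_iff.1 hxor
      omega
    refine ⟨(a, b), mem_Aset.2 ⟨hlt a (by simp), hlt b (by simp), ?_⟩, ?_⟩
    · rw [← hc]; exact hlt c (by simp)
    · show ({a, b, a ^^^ b} : Multiset ℕ) = _
      rw [← hc]
  · rintro ⟨p, hp, rfl⟩
    obtain ⟨p1, p2⟩ := p
    rw [mem_Aset] at hp
    obtain ⟨h1, h2, h3⟩ := hp
    refine ⟨rfl, ?_, Finset.notMem_empty _, ?_⟩
    · intro a ha
      have : a = p1 ∨ a = p2 ∨ a = p1 ^^^ p2 := by simpa [Phi] using ha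
      rcases this with rfl | rfl | rfl <;> assumption
    · refine (bouton (p1 + p2 + (p1 ^^^ p2)) p1 p2 (p1 ^^^ p2) rfl).2 ?_
      simp


end NimAux

/-- Explicit formula for π in ordinary Nim: if 2^k is the greatest power of 2 ≤ x,
then π(x) = (3x² − 6x·2^k + 4·(2^k)² + 3x + 2)/6. -/
theorem nim_pi_formula (x k : ℕ) (hx : 1 ≤ x)
    (h1 : 2 ^ k ≤ x) (h2 : x < 2 ^ (k + 1)) :
    6 * (piNim ∅ x : ℤ) =
      3 * (x : ℤ) ^ 2 - 6 * (x : ℤ) * 2 ^ k + 4 * ((2 : ℤ) ^ k) ^ 2 + 3 * (x : ℤ) + 2 := by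
  have hM : piNim ∅ x = ((Aset x).image Phi).card := by
    rw [piNim, M_eq x hx, Set.ncard_coe_finset]
  have hA : (Aset x).card = 2^k * 2^k + 3*((x - 2^k) * (x - 2^k)) := cardA k x hx h1 h2
  have hsplitcard : (A0set x).card + (A1set x).card = (Aset x).card := by
    classical
    exact Finset.card_filter_add_card_filter_not
      (p := fun p : ℕ × ℕ => p.1 = p.2 ∨ p.1 = 0 ∨ p.2 = 0)
  have himg : ((Aset x).image Phi).card = x + ((A1set x).image Phi).card := by
    rw [← Aset_split, Finset.image_union,
      Finset.card_union_of_disjoint (img_disjoint x), A0_image, dup_image_card]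
  have h6 : (A1set x).card = 6 * ((A1set x).image Phi).card := A1_card x
  have hA0 : (A0set x).card + 2 = 3 * x := A0_card x hx
  have key : 6 * (piNim ∅ x) = 3*x + 2 + 2^k*2^k + 3*((x-2^k)*(x-2^k)) := by
    omega
  have hcast := congrArg (Nat.cast : ℕ → ℤ) key
  push_cast [Nat.cast_sub h1] at hcast
  rw [hcast]
  ring
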